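/- arXiv:1901.08464 — 2 statements merged into one kernel-verified Lean document; each statement's English description precedes it below -/
import Mathlib

section
/- For any family 𝒯 of complete L-theories, any ordinal α, and any n ≥ 1: RS(𝒯) = α and ds(𝒯) = n if and only if there are pairwise inconsistent L-sentences φ_1, …, φ_n such that 𝒯 is the disjoint union of the subfamilies 𝒯_{φ_1}, …, 𝒯_{φ_n} and each 𝒯_{φ_i} is α-minimal. -/
open FirstOrder Language Cardinal Set

universe u v w

variable {L : FirstOrder.Language.{u, v}}

/-- A complete theory: a satisfiable set of sentences containing each sentence or its
negation (`Theory.IsMaximal` in Mathlib). -/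
abbrev CTheory (L : FirstOrder.Language.{u, v}) : Type max u v :=
  {T : L.Theory // T.IsMaximal}

/-- The neighbourhood `𝒯_φ = {T ∈ 𝒯 | φ ∈ T}`. -/
def nbhd (𝒯 : Set (CTheory L)) (φ : L.Sentence) : Set (CTheory L) :=
  {T | T ∈ 𝒯 ∧ φ ∈ T.1}

/-- `T` is an accumulation point of `𝒯` if for every sentence `φ ∈ T` the set `𝒯_φ` is
infinite. -/
def IsAccPoint (𝒯 : Set (CTheory L)) (T : CTheory L) : Prop :=
  ∀ φ : L.Sentence, φ ∈ T.1 → (nbhd 𝒯 φ).Infinite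

/-- The `E`-closure of `𝒯`: `𝒯` together with all its accumulation points. -/
def ClE (𝒯 : Set (CTheory L)) : Set (CTheory L) :=
  𝒯 ∪ {T | IsAccPoint 𝒯 T}

/-- The `e`-spectrum of `𝒯`: the cardinality of the set of accumulation points of `𝒯`. -/
noncomputable def eSp (𝒯 : Set (CTheory L)) : Cardinal :=
  Cardinal.mk {T : CTheory L // IsAccPoint 𝒯 T}

/-- Two sentences are inconsistent if `{φ, ψ}` is unsatisfiable. -/
def Inconsistent (φ ψ : L.Sentence) : Prop :=
  ¬ FirstOrder.Language.Theory.IsSatisfiable ({φ, ψ} : L.Theory)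

open Classical in
/-- `RSge α 𝒯` says `RS(𝒯) ≥ α`: `RS(𝒯) ≥ 0` iff `𝒯 ≠ ∅`; `RS(𝒯) ≥ 1` iff `𝒯` is infinite;
for `β ≥ 1`, `RS(𝒯) ≥ β + 1` iff there are pairwise inconsistent sentences `φ_n`, `n ∈ ℕ`,
with `RS(𝒯_{φ_n}) ≥ β` for all `n`; for limit `λ`, `RS(𝒯) ≥ λ` iff `RS(𝒯) ≥ β` for all
`β < λ`. -/
noncomputable def RSge (α : Ordinal.{w}) : Set (CTheory L) → Prop :=
  @Ordinal.limitRecOn (fun _ => Set (CTheory L) → Prop) α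
    (fun 𝒯 => 𝒯.Nonempty)
    (fun β ih 𝒯 =>
      if β = 0 then 𝒯.Infinite
      else ∃ φ : ℕ → L.Sentence,
        (∀ m n : ℕ, m ≠ n → Inconsistent (φ m) (φ n)) ∧ ∀ k : ℕ, ih (nbhd 𝒯 (φ k)))
    (fun β _ ih 𝒯 => ∀ γ : Ordinal, ∀ h : γ < β, ih γ h 𝒯)

/-- `RS(𝒯) = α` for an ordinal `α`: `RS(𝒯) ≥ α` but not `RS(𝒯) ≥ α + 1`. -/
def RSeq (𝒯 : Set (CTheory L)) (α : Ordinal.{w}) : Prop :=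
  RSge α 𝒯 ∧ ¬ RSge (α + 1) 𝒯

/-- `RS(𝒯) = ∞`: `RS(𝒯) ≥ α` for every ordinal `α`. -/
def RSinf (𝒯 : Set (CTheory L)) : Prop :=
  ∀ α : Ordinal.{w}, RSge α 𝒯

/-- `ds(𝒯) = n` (relative to `RS(𝒯) = α`): `n` is the largest natural number for which
there exist `n` pairwise inconsistent sentences `φ_1, …, φ_n` with `RS(𝒯_{φ_i}) = α`. -/
def dsEq (𝒯 : Set (CTheory L)) (α : Ordinal.{w}) (n : ℕ) : Prop :=
  IsGreatest {m : ℕ | ∃ φ : Fin m → L.Sentence,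
    (∀ i j : Fin m, i ≠ j → Inconsistent (φ i) (φ j)) ∧
    ∀ i : Fin m, RSeq (nbhd 𝒯 (φ i)) α} n

/-- `𝒯` is `e`-minimal: for every sentence `φ`, `𝒯_φ` is finite or `𝒯_{¬φ}` is finite. -/
def EMinimal (𝒯 : Set (CTheory L)) : Prop :=
  ∀ φ : L.Sentence, (nbhd 𝒯 φ).Finite ∨ (nbhd 𝒯 φ.not).Finite

/-- `𝒯` is `a`-minimal: `𝒯` has infinitely many accumulation points and for every sentence
`φ`, `𝒯_φ` or `𝒯_{¬φ}` has only finitely many accumulation points. -/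
def AMinimal (𝒯 : Set (CTheory L)) : Prop :=
  {T : CTheory L | IsAccPoint 𝒯 T}.Infinite ∧
  ∀ φ : L.Sentence,
    {T : CTheory L | IsAccPoint (nbhd 𝒯 φ) T}.Finite ∨
    {T : CTheory L | IsAccPoint (nbhd 𝒯 φ.not) T}.Finite

/-- `𝒯` is `α`-minimal: `RS(𝒯) = α` and for every sentence `φ`, `RS(𝒯_φ) < α` or
`RS(𝒯_{¬φ}) < α`. -/
def AlphaMinimal (𝒯 : Set (CTheory L)) (α : Ordinal.{w}) : Prop :=
  RSeq 𝒯 α ∧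
  ∀ φ : L.Sentence, ¬ RSge α (nbhd 𝒯 φ) ∨ ¬ RSge α (nbhd 𝒯 φ.not)

section Helpers

lemma CTheory.mem_iff_realize (T : CTheory L) (φ : L.Sentence) :
    φ ∈ T.1 ↔ T.2.1.some ⊨ φ := by
  rw [T.2.mem_iff_models φ]
  exact (Theory.IsComplete.realize_sentence_iff T.2.isComplete φ T.2.1.some).symm

lemma CTheory.mem_not_iff (T : CTheory L) (φ : L.Sentence) : φ.not ∈ T.1 ↔ φ ∉ T.1 := by
  simp only [CTheory.mem_iff_realize, Sentence.realize_not]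

lemma CTheory.mem_inf_iff (T : CTheory L) (φ ψ : L.Sentence) :
    φ ⊓ ψ ∈ T.1 ↔ φ ∈ T.1 ∧ ψ ∈ T.1 := by
  simp only [CTheory.mem_iff_realize]
  exact Formula.realize_inf

lemma CTheory.mem_sup_iff (T : CTheory L) (φ ψ : L.Sentence) :
    φ ⊔ ψ ∈ T.1 ↔ φ ∈ T.1 ∨ ψ ∈ T.1 := by
  simp only [CTheory.mem_iff_realize]
  exact Formula.realize_sup

lemma CTheory.mem_iInf_iff (T : CTheory L) {β : Type*} [Finite β]
    (f : β → L.Sentence) : BoundedFormula.iInf f ∈ T.1 ↔ ∀ b, f b ∈ T.1 := by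
  simp only [CTheory.mem_iff_realize]
  constructor
  · intro h b
    exact (BoundedFormula.realize_iInf (f := f)).1 h b
  · intro h
    exact (BoundedFormula.realize_iInf (f := f)).2 h

end Helpers
section Incons

lemma Inconsistent.symm {φ ψ : L.Sentence} (h : Inconsistent φ ψ) : Inconsistent ψ φ := by
  unfold Inconsistent at *
  rwa [Set.pair_comm]

lemma Inconsistent.elim {φ ψ : L.Sentence} (h : Inconsistent φ ψ) (M : Type*)
    [L.Structure M] [Nonempty M] (hφ : M ⊨ φ) (hψ : M ⊨ ψ) : False := by
  have : M ⊨ ({φ, ψ} : L.Theory) := by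
    rw [Theory.model_iff]
    intro χ hχ
    rcases hχ with rfl | hχ
    · exact hφ
    · rw [Set.mem_singleton_iff] at hχ; subst hχ; exact hψ
  exact h (Theory.Model.isSatisfiable M)

lemma inconsistent_of_realize {φ ψ : L.Sentence}
    (h : ∀ (M : Type (max u v)) [L.Structure M] [Nonempty M], M ⊨ φ → M ⊨ ψ → False) :
    Inconsistent φ ψ := by
  intro hsat
  obtain ⟨M⟩ := hsat
  exact h M (Theory.realize_sentence_of_mem (T := ({φ, ψ} : L.Theory)) (by simp))
    (Theory.realize_sentence_of_mem (T := ({φ, ψ} : L.Theory)) (by simp))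

lemma Inconsistent.not_mem {φ ψ : L.Sentence} {T : CTheory L} (h : Inconsistent φ ψ)
    (hφ : φ ∈ T.1) : ψ ∉ T.1 := by
  intro hψ
  exact h (T.2.1.mono (Set.insert_subset hφ (Set.singleton_subset_iff.2 hψ)))

lemma Inconsistent.not_mem' {φ ψ : L.Sentence} {T : CTheory L} (h : Inconsistent φ ψ)
    (hψ : ψ ∈ T.1) : φ.not ∈ T.1 :=
  (T.mem_not_iff φ).2 (fun hφ => h.not_mem hφ hψ)

end Incons

section Nbhd

lemma nbhd_subset (𝒯 : Set (CTheory L)) (φ : L.Sentence) : nbhd 𝒯 φ ⊆ 𝒯 :=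
  fun _ hT => hT.1

lemma nbhd_mono {𝒜 ℬ : Set (CTheory L)} (h : 𝒜 ⊆ ℬ) (φ : L.Sentence) :
    nbhd 𝒜 φ ⊆ nbhd ℬ φ :=
  fun _ hT => ⟨h hT.1, hT.2⟩

lemma nbhd_union (𝒜 ℬ : Set (CTheory L)) (φ : L.Sentence) :
    nbhd (𝒜 ∪ ℬ) φ = nbhd 𝒜 φ ∪ nbhd ℬ φ := by
  ext T
  simp only [nbhd, Set.mem_setOf_eq, Set.mem_union, or_and_right]

lemma nbhd_iUnion {ι : Type*} (A : ι → Set (CTheory L)) (φ : L.Sentence) :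
    nbhd (⋃ i, A i) φ = ⋃ i, nbhd (A i) φ := by
  ext T
  simp only [nbhd, Set.mem_setOf_eq, Set.mem_iUnion, exists_and_right]

lemma nbhd_nbhd (𝒯 : Set (CTheory L)) (φ ψ : L.Sentence) :
    nbhd (nbhd 𝒯 φ) ψ = nbhd 𝒯 (φ ⊓ ψ) := by
  ext T
  simp only [nbhd, Set.mem_setOf_eq, CTheory.mem_inf_iff, and_assoc]

lemma nbhd_subset_of_imp {𝒯 : Set (CTheory L)} {φ ψ : L.Sentence}
    (h : ∀ T : CTheory L, φ ∈ T.1 → ψ ∈ T.1) : nbhd 𝒯 φ ⊆ nbhd 𝒯 ψ :=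
  fun T hT => ⟨hT.1, h T hT.2⟩

end Nbhd
section RSgeLemmas

lemma RSge_zero (𝒯 : Set (CTheory L)) : RSge (0 : Ordinal.{w}) 𝒯 ↔ 𝒯.Nonempty := by
  unfold RSge
  rw [Ordinal.limitRecOn_zero]

lemma RSge_one (𝒯 : Set (CTheory L)) : RSge (1 : Ordinal.{w}) 𝒯 ↔ 𝒯.Infinite := by
  unfold RSge
  rw [show (1 : Ordinal.{w}) = Order.succ 0 from (Ordinal.add_one_eq_succ 0) ▸ (zero_add 1).symm,
    Ordinal.limitRecOn_succ]
  simp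

lemma RSge_succ {β : Ordinal.{w}} (hβ : β ≠ 0) (𝒯 : Set (CTheory L)) :
    RSge (β + 1) 𝒯 ↔ ∃ φ : ℕ → L.Sentence,
      (∀ m n : ℕ, m ≠ n → Inconsistent (φ m) (φ n)) ∧
      ∀ k : ℕ, RSge β (nbhd 𝒯 (φ k)) := by
  unfold RSge
  rw [Ordinal.add_one_eq_succ, Ordinal.limitRecOn_succ]
  rw [if_neg hβ]

lemma RSge_limit {β : Ordinal.{w}} (hβ : Order.IsSuccLimit β) (𝒯 : Set (CTheory L)) :
    RSge β 𝒯 ↔ ∀ γ < β, RSge γ 𝒯 := by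
  unfold RSge
  rw [Ordinal.limitRecOn_limit _ _ _ _ hβ]

lemma RSge_mono (α : Ordinal.{w}) : ∀ {𝒜 ℬ : Set (CTheory L)}, 𝒜 ⊆ ℬ →
    RSge α 𝒜 → RSge α ℬ := by
  induction α using Ordinal.limitRecOn with
  | zero =>
    intro 𝒜 ℬ hsub h
    rw [RSge_zero] at h ⊢
    exact h.mono hsub
  | add_one β ih =>
    intro 𝒜 ℬ hsub h
    by_cases hβ : β = 0
    · subst hβ
      rw [zero_add, RSge_one] at h ⊢
      exact h.mono hsub
    · rw [RSge_succ hβ] at h ⊢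
      obtain ⟨φ, hinc, hk⟩ := h
      exact ⟨φ, hinc, fun k => ih (nbhd_mono hsub (φ k)) (hk k)⟩
  | limit β hlim ih =>
    intro 𝒜 ℬ hsub h
    rw [RSge_limit hlim] at h ⊢
    exact fun γ hγ => ih γ hγ hsub (h γ hγ)

lemma RSge_of_succ {β : Ordinal.{w}} {𝒯 : Set (CTheory L)} (h : RSge (β + 1) 𝒯) :
    RSge β 𝒯 := by
  by_cases hβ : β = 0
  · subst hβ
    rw [zero_add, RSge_one] at h
    rw [RSge_zero]
    exact h.nonempty
  · rw [RSge_succ hβ] at h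
    obtain ⟨φ, _, hk⟩ := h
    exact RSge_mono β (nbhd_subset 𝒯 (φ 0)) (hk 0)

lemma RSge_of_le : ∀ {α β : Ordinal.{w}}, β ≤ α → ∀ {𝒯 : Set (CTheory L)},
    RSge α 𝒯 → RSge β 𝒯 := by
  intro α
  induction α using Ordinal.limitRecOn with
  | zero =>
    intro β hβ 𝒯 h
    rwa [nonpos_iff_eq_zero.1 hβ]
  | add_one α ih =>
    intro β hβ 𝒯 h
    rcases lt_or_eq_of_le hβ with hlt | rfl
    · exact ih (Order.lt_add_one_iff.1 hlt) (RSge_of_succ h)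
    · exact h
  | limit α hlim ih =>
    intro β hβ 𝒯 h
    rcases lt_or_eq_of_le hβ with hlt | rfl
    · exact (RSge_limit hlim 𝒯).1 h β hlt
    · exact h

lemma RSge_union : ∀ {α : Ordinal.{w}} {𝒜 ℬ : Set (CTheory L)},
    RSge α (𝒜 ∪ ℬ) → RSge α 𝒜 ∨ RSge α ℬ := by
  intro α
  induction α using Ordinal.limitRecOn with
  | zero =>
    intro 𝒜 ℬ h
    rw [RSge_zero] at h
    rcases h with ⟨T, hT | hT⟩
    · exact Or.inl ((RSge_zero 𝒜).2 ⟨T, hT⟩)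
    · exact Or.inr ((RSge_zero ℬ).2 ⟨T, hT⟩)
  | add_one α ih =>
    intro 𝒜 ℬ h
    by_cases hα : α = 0
    · subst hα
      rw [zero_add] at h ⊢
      rw [RSge_one] at h
      rw [RSge_one 𝒜, RSge_one ℬ]
      rcases Set.infinite_union.1 h with h' | h'
      · exact Or.inl h'
      · exact Or.inr h'
    · rw [RSge_succ hα] at h
      obtain ⟨φ, hinc, hk⟩ := h
      have hsplit : ∀ k : ℕ, RSge α (nbhd 𝒜 (φ k)) ∨ RSge α (nbhd ℬ (φ k)) := by
        intro k
        apply ih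
        rw [← nbhd_union]
        exact hk k
      by_cases hS : {k : ℕ | RSge α (nbhd 𝒜 (φ k))}.Infinite
      · left
        rw [RSge_succ hα]
        set e := hS.natEmbedding
        refine ⟨fun k => φ (e k), fun m n hmn => hinc _ _ ?_, fun k => (e k).2⟩
        exact fun hc => hmn (e.injective (Subtype.ext hc))
      · right
        rw [RSge_succ hα]
        have hS' : {k : ℕ | RSge α (nbhd ℬ (φ k))}.Infinite := by
          intro hfin
          apply Set.infinite_univ (α := ℕ)
          have : (Set.univ : Set ℕ) ⊆ {k : ℕ | RSge α (nbhd 𝒜 (φ k))} ∪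
              {k : ℕ | RSge α (nbhd ℬ (φ k))} := by
            intro k _
            exact hsplit k
          exact Set.Finite.subset ((Set.not_infinite.1 hS).union hfin) this
        set e := hS'.natEmbedding
        refine ⟨fun k => φ (e k), fun m n hmn => hinc _ _ ?_, fun k => (e k).2⟩
        exact fun hc => hmn (e.injective (Subtype.ext hc))
  | limit α hlim ih =>
    intro 𝒜 ℬ h
    rw [RSge_limit hlim] at h
    by_cases hA : ∀ γ < α, RSge γ 𝒜
    · exact Or.inl ((RSge_limit hlim 𝒜).2 hA)
    · push_neg at hA
      obtain ⟨γ₀, hγ₀, hnA⟩ := hA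
      right
      rw [RSge_limit hlim]
      intro γ hγ
      have hmax : max γ γ₀ < α := max_lt hγ hγ₀
      rcases ih (max γ γ₀) hmax (h _ hmax) with h' | h'
      · exact absurd (RSge_of_le (le_max_right γ γ₀) h') hnA
      · exact RSge_of_le (le_max_left γ γ₀) h'

lemma not_RSge_empty (α : Ordinal.{w}) : ¬ RSge α (∅ : Set (CTheory L)) := by
  intro h
  have := RSge_of_le (zero_le : (0 : Ordinal.{w}) ≤ α) h
  rw [RSge_zero] at this
  exact Set.not_nonempty_empty this

lemma RSge_iUnion : ∀ {m : ℕ} {α : Ordinal.{w}} {A : Fin m → Set (CTheory L)},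
    RSge α (⋃ i, A i) → ∃ i, RSge α (A i) := by
  intro m
  induction m with
  | zero =>
    intro α A h
    rw [Set.iUnion_of_empty] at h
    exact absurd h (not_RSge_empty α)
  | succ m ih =>
    intro α A h
    have heq : (⋃ i, A i) = A 0 ∪ ⋃ i : Fin m, A i.succ := by
      ext x
      simp [Fin.exists_fin_succ]
    rw [heq] at h
    rcases RSge_union h with h' | h'
    · exact ⟨0, h'⟩
    · obtain ⟨i, hi⟩ := ih h'
      exact ⟨i.succ, hi⟩

end RSgeLemmas
section MoreIncons

lemma incons_inf_left {φ₁ φ₂ : L.Sentence} (h : Inconsistent φ₁ φ₂) (ψ : L.Sentence) :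
    Inconsistent (φ₁ ⊓ ψ) φ₂ :=
  inconsistent_of_realize fun M _ _ h1 h2 => h.elim M (Formula.realize_inf.1 h1).1 h2

lemma incons_inf_right {φ₁ φ₂ : L.Sentence} (h : Inconsistent φ₁ φ₂) (ψ : L.Sentence) :
    Inconsistent φ₁ (φ₂ ⊓ ψ) :=
  ((incons_inf_left h.symm ψ).symm : _)

lemma incons_inf_not (χ₁ χ₂ ψ : L.Sentence) : Inconsistent (χ₁ ⊓ ψ) (χ₂ ⊓ ψ.not) :=
  inconsistent_of_realize fun M _ _ h1 h2 =>
    (Formula.realize_not.1 (Formula.realize_inf.1 h2).2) (Formula.realize_inf.1 h1).2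

lemma disjoint_nbhd {φ ψ : L.Sentence} (h : Inconsistent φ ψ) (𝒯 : Set (CTheory L)) :
    Disjoint (nbhd 𝒯 φ) (nbhd 𝒯 ψ) :=
  Set.disjoint_left.2 fun _T hT hT' => h.not_mem hT.2 hT'.2

lemma RSeq_mono_subset {𝒯 𝒜 : Set (CTheory L)} {α : Ordinal.{w}} (h : RSeq 𝒯 α)
    (hsub : 𝒜 ⊆ 𝒯) (hge : RSge α 𝒜) : RSeq 𝒜 α :=
  ⟨hge, fun h' => h.2 (RSge_mono _ hsub h')⟩

end MoreIncons
/-- Proposition 2.14: `RS(𝒯) = α` with `ds(𝒯) = n` if and only if `𝒯` is a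
disjoint union of subfamilies `𝒯_{φ_1}, …, 𝒯_{φ_n}`, for some pairwise inconsistent
sentences `φ_1, …, φ_n`, each of which is `α`-minimal. -/
theorem rank_iff_alphaMinimal_partition (𝒯 : Set (CTheory L)) (α : Ordinal.{w})
    (n : ℕ) (hn : 1 ≤ n) :
    (RSeq 𝒯 α ∧ dsEq 𝒯 α n) ↔
    ∃ φ : Fin n → L.Sentence,
      (∀ i j : Fin n, i ≠ j → Inconsistent (φ i) (φ j)) ∧
      (∀ i j : Fin n, i ≠ j → Disjoint (nbhd 𝒯 (φ i)) (nbhd 𝒯 (φ j))) ∧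
      (⋃ i : Fin n, nbhd 𝒯 (φ i)) = 𝒯 ∧
      ∀ i : Fin n, AlphaMinimal (nbhd 𝒯 (φ i)) α := by
  have i0 : Fin n := ⟨0, hn⟩
  constructor
  · rintro ⟨hR, hds⟩
    obtain ⟨φ, hinc, hRS⟩ := hds.1
    -- modify φ at i0 so that the neighbourhoods cover 𝒯
    set ψneg : L.Sentence :=
      BoundedFormula.iInf (fun j : Fin n => (φ j).not) with hψneg
    set φ' : Fin n → L.Sentence := Function.update φ i0 (φ i0 ⊔ ψneg) with hφ'
    have hmemφ' : ∀ (j : Fin n) (T : CTheory L), φ j ∈ T.1 → φ' j ∈ T.1 := by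
      intro j T hT
      by_cases hj : j = i0
      · subst hj
        rw [hφ', Function.update_self, CTheory.mem_sup_iff]
        exact Or.inl hT
      · rwa [hφ', Function.update_of_ne hj]
    have hinc' : ∀ i j : Fin n, i ≠ j → Inconsistent (φ' i) (φ' j) := by
      have key : ∀ j : Fin n, j ≠ i0 → Inconsistent (φ' i0) (φ' j) := by
        intro j hj
        rw [hφ', Function.update_self, Function.update_of_ne hj]
        apply inconsistent_of_realize
        intro M _ _ h1 h2
        rcases Formula.realize_sup.1 h1 with h1' | h1'
        · exact (hinc i0 j (Ne.symm hj)).elim M h1' h2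
        · have := (BoundedFormula.realize_iInf
            (f := fun j : Fin n => (φ j).not)).1 h1' j
          exact (BoundedFormula.realize_not.1 this) h2
      intro i j hij
      by_cases hi : i = i0
      · subst hi; exact key j (Ne.symm hij)
      · by_cases hj : j = i0
        · subst hj; exact (key i hi).symm
        · rw [hφ', Function.update_of_ne hi, Function.update_of_ne hj]
          exact hinc i j hij
    have hsub0 : nbhd 𝒯 (φ i0) ⊆ nbhd 𝒯 (φ' i0) :=
      nbhd_subset_of_imp (hmemφ' i0)
    have hRS' : ∀ i : Fin n, RSeq (nbhd 𝒯 (φ' i)) α := by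
      intro i
      by_cases hi : i = i0
      · rw [hi]
        exact RSeq_mono_subset hR (nbhd_subset _ _)
          (RSge_mono α hsub0 (hRS i0).1)
      · rw [hφ', Function.update_of_ne hi]
        exact hRS i
    have hcover : (⋃ i : Fin n, nbhd 𝒯 (φ' i)) = 𝒯 := by
      apply Set.Subset.antisymm
      · exact Set.iUnion_subset fun i => nbhd_subset 𝒯 (φ' i)
      · intro T hT
        rw [Set.mem_iUnion]
        by_cases hex : ∃ j : Fin n, φ j ∈ T.1
        · obtain ⟨j, hj⟩ := hex
          exact ⟨j, hT, hmemφ' j T hj⟩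
        · push_neg at hex
          refine ⟨i0, hT, ?_⟩
          rw [hφ', Function.update_self, CTheory.mem_sup_iff]
          right
          rw [hψneg, CTheory.mem_iInf_iff]
          intro j
          rw [CTheory.mem_not_iff]
          exact hex j
    refine ⟨φ', hinc', fun i j hij => disjoint_nbhd (hinc' i j hij) 𝒯, hcover, ?_⟩
    -- α-minimality of each piece
    intro i
    refine ⟨hRS' i, ?_⟩
    intro ψ
    by_contra hcon
    push_neg at hcon
    obtain ⟨h1, h2⟩ := hcon
    rw [nbhd_nbhd] at h1 h2
    -- build n+1 pairwise inconsistent sentences of rank α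
    set u : Fin n → L.Sentence := Function.update φ' i (φ' i ⊓ ψ) with hu
    set χ : Fin (n + 1) → L.Sentence := Fin.snoc u (φ' i ⊓ ψ.not) with hχ
    have hucases : ∀ a b : Fin n, a ≠ b → Inconsistent (u a) (u b) := by
      intro a b hab
      by_cases ha : a = i
      · subst ha
        rw [hu, Function.update_self, Function.update_of_ne (Ne.symm hab)]
        exact incons_inf_left (hinc' a b hab) ψ
      · by_cases hb : b = i
        · subst hb
          rw [hu, Function.update_self, Function.update_of_ne ha]
          exact incons_inf_right (hinc' a b hab) ψ
        · rw [hu, Function.update_of_ne ha, Function.update_of_ne hb]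
          exact hinc' a b hab
    have hulast : ∀ a : Fin n, Inconsistent (u a) (φ' i ⊓ ψ.not) := by
      intro a
      by_cases ha : a = i
      · subst ha
        rw [hu, Function.update_self]
        exact incons_inf_not _ _ _
      · rw [hu, Function.update_of_ne ha]
        exact incons_inf_right (hinc' a i ha) ψ.not
    have hχinc : ∀ a b : Fin (n + 1), a ≠ b → Inconsistent (χ a) (χ b) := by
      intro a b hab
      induction a using Fin.lastCases with
      | last =>
        induction b using Fin.lastCases with
        | last => exact absurd rfl hab
        | cast b =>
          rw [hχ, Fin.snoc_last, Fin.snoc_castSucc]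
          exact (hulast b).symm
      | cast a =>
        induction b using Fin.lastCases with
        | last =>
          rw [hχ, Fin.snoc_last, Fin.snoc_castSucc]
          exact hulast a
        | cast b =>
          rw [hχ, Fin.snoc_castSucc, Fin.snoc_castSucc]
          exact hucases a b (fun h => hab (congrArg Fin.castSucc h))
    have hχRS : ∀ a : Fin (n + 1), RSeq (nbhd 𝒯 (χ a)) α := by
      intro a
      induction a using Fin.lastCases with
      | last =>
        rw [hχ, Fin.snoc_last]
        exact RSeq_mono_subset hR (nbhd_subset _ _) h2
      | cast a =>
        rw [hχ, Fin.snoc_castSucc]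
        by_cases ha : a = i
        · subst ha
          rw [hu, Function.update_self]
          exact RSeq_mono_subset hR (nbhd_subset _ _) h1
        · rw [hu, Function.update_of_ne ha]
          exact hRS' a
    have : n + 1 ≤ n := hds.2 ⟨χ, hχinc, hχRS⟩
    omega
  · rintro ⟨φ, hinc, _hdisj, hcover, hmin⟩
    have hR : RSeq 𝒯 α := by
      constructor
      · exact RSge_mono α (nbhd_subset 𝒯 (φ i0)) (hmin i0).1.1
      · intro h
        rw [← hcover] at h
        obtain ⟨i, hi⟩ := RSge_iUnion h
        exact (hmin i).1.2 hi
    refine ⟨hR, ⟨φ, hinc, fun i => (hmin i).1⟩, ?_⟩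
    -- upper bound for the degree
    rintro m ⟨ψ, hincψ, hψ⟩
    by_contra hmn
    push_neg at hmn
    have hch : ∀ j : Fin m, ∃ i : Fin n, RSge α (nbhd (nbhd 𝒯 (φ i)) (ψ j)) := by
      intro j
      have := (hψ j).1
      rw [← hcover, nbhd_iUnion] at this
      exact RSge_iUnion this
    choose g hg using hch
    obtain ⟨j, j', hjj', hgjj'⟩ :=
      Fintype.exists_ne_map_eq_of_card_lt g (by simpa using hmn)
    rcases (hmin (g j)).2 (ψ j) with hbad | hgood
    · exact hbad (hg j)
    · apply hgood
      refine RSge_mono α ?_ (hgjj' ▸ hg j')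
      apply nbhd_subset_of_imp
      intro T hT
      exact (hincψ j j' hjj').not_mem' hT
end

section
/- If the language L has at most countably many sentences, then for any family 𝒯 of complete L-theories the following conditions are equivalent: (1) |Cl_E(𝒯)| = 2^ℵ₀; (2) e-Sp(𝒯) = 2^ℵ₀; (3) RS(𝒯) = ∞. -/
open FirstOrder Language Cardinal Set

universe u v w

variable {L : FirstOrder.Language.{u, v}}

namespace CT

lemma mem_iff_realize (T : CTheory L) (M : (T.1).ModelType) (φ : L.Sentence) :
    φ ∈ T.1 ↔ M ⊨ φ := by
  constructor
  · intro h
    exact Theory.realize_sentence_of_mem T.1 h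
  · intro h
    rcases T.2.2 φ with h' | h'
    · exact h'
    · have := Theory.realize_sentence_of_mem T.1 h' (M := M)
      rw [Sentence.realize_not] at this
      exact absurd h this

lemma not_mem_iff (T : CTheory L) (φ : L.Sentence) : φ.not ∈ T.1 ↔ φ ∉ T.1 := by
  obtain ⟨M⟩ := T.2.1
  rw [mem_iff_realize T M, mem_iff_realize T M, Sentence.realize_not]

lemma not_both (T : CTheory L) {φ : L.Sentence} (h1 : φ ∈ T.1) (h2 : φ.not ∈ T.1) : False :=
  (not_mem_iff T φ).1 h2 h1

lemma inf_mem_iff (T : CTheory L) (φ ψ : L.Sentence) :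
    φ ⊓ ψ ∈ T.1 ↔ φ ∈ T.1 ∧ ψ ∈ T.1 := by
  obtain ⟨M⟩ := T.2.1
  rw [mem_iff_realize T M, mem_iff_realize T M, mem_iff_realize T M]
  exact Formula.realize_inf

lemma top_mem (T : CTheory L) : (⊤ : L.Sentence) ∈ T.1 := by
  obtain ⟨M⟩ := T.2.1
  rw [mem_iff_realize T M]
  exact Formula.realize_top.2 trivial

lemma mem_not_of_inconsistent (T : CTheory L) {φ ψ : L.Sentence}
    (h : Inconsistent φ ψ) (hφ : φ ∈ T.1) : ψ.not ∈ T.1 := by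
  rw [not_mem_iff]
  intro hψ
  exact h (T.2.1.mono (by intro x hx; rcases hx with rfl | rfl; exacts [hφ, hψ]))

lemma inconsistent_symm {φ ψ : L.Sentence} (h : Inconsistent φ ψ) : Inconsistent ψ φ := by
  unfold Inconsistent at *
  rwa [Set.pair_comm]

lemma inconsistent_not (φ : L.Sentence) : Inconsistent φ φ.not := by
  rintro ⟨M⟩
  have h1 : M ⊨ φ := M.is_model.realize_of_mem (φ := φ) (by simp)
  have h2 : M ⊨ φ.not := M.is_model.realize_of_mem (φ := φ.not) (by simp)
  rw [Sentence.realize_not] at h2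
  exact h2 h1

end CT

namespace CT
variable {𝒯 𝒮 : Set (CTheory L)}

lemma RSge_zero : RSge (0 : Ordinal.{w}) 𝒯 ↔ 𝒯.Nonempty := by
  rw [RSge, Ordinal.limitRecOn_zero]

lemma RSge_one : RSge (1 : Ordinal.{w}) 𝒯 ↔ 𝒯.Infinite := by
  have : (1 : Ordinal.{w}) = Order.succ 0 := by simp
  rw [RSge, this, Ordinal.limitRecOn_succ]
  simp

lemma RSge_succ_of_ne {β : Ordinal.{w}} (hβ : β ≠ 0) :
    RSge (Order.succ β) 𝒯 ↔ ∃ φ : ℕ → L.Sentence,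
      (∀ m n : ℕ, m ≠ n → Inconsistent (φ m) (φ n)) ∧
      ∀ k : ℕ, RSge β (nbhd 𝒯 (φ k)) := by
  rw [RSge, Ordinal.limitRecOn_succ, if_neg hβ]
  rfl

lemma RSge_limit {β : Ordinal.{w}} (hβ : Order.IsSuccLimit β) :
    RSge β 𝒯 ↔ ∀ γ < β, RSge γ 𝒯 := by
  rw [RSge, Ordinal.limitRecOn_limit _ _ _ _ hβ]
  rfl

lemma nbhd_subset (φ : L.Sentence) : nbhd 𝒯 φ ⊆ 𝒯 := fun _ h => h.1

lemma nbhd_mono (h : 𝒮 ⊆ 𝒯) (φ : L.Sentence) : nbhd 𝒮 φ ⊆ nbhd 𝒯 φ :=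
  fun _ hx => ⟨h hx.1, hx.2⟩

lemma RSge_mono (α : Ordinal.{w}) : ∀ {𝒮 𝒯 : Set (CTheory L)}, 𝒮 ⊆ 𝒯 → RSge α 𝒮 → RSge α 𝒯 := by
  induction α using Ordinal.induction with
  | h α IH =>
    intro 𝒮 𝒯 hsub h
    rcases Ordinal.zero_or_succ_or_isSuccLimit α with rfl | ⟨β, rfl⟩ | hlim
    · exact RSge_zero.2 ((RSge_zero.1 h).mono hsub)
    · rcases eq_or_ne β 0 with rfl | hβ
      · rw [Ordinal.succ_zero, RSge_one] at h ⊢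
        exact h.mono hsub
      · rw [RSge_succ_of_ne hβ] at h ⊢
        obtain ⟨φ, h1, h2⟩ := h
        exact ⟨φ, h1, fun k => IH β (Order.lt_succ β) (nbhd_mono hsub (φ k)) (h2 k)⟩
    · rw [RSge_limit hlim] at h ⊢
      exact fun γ hγ => IH γ hγ hsub (h γ hγ)

end CT

namespace CT
variable {𝒯 : Set (CTheory L)}

lemma RSge_succ_down {δ : Ordinal.{w}} (h : RSge (Order.succ δ) 𝒯) : RSge δ 𝒯 := by
  rcases eq_or_ne δ 0 with rfl | hδ
  · rw [Ordinal.succ_zero, RSge_one] at h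
    exact RSge_zero.2 h.nonempty
  · rw [RSge_succ_of_ne hδ] at h
    obtain ⟨φ, -, h2⟩ := h
    exact RSge_mono δ (nbhd_subset (φ 0)) (h2 0)

lemma RSge_antitone {β α : Ordinal.{w}} (hβ : β ≤ α) (h : RSge α 𝒯) : RSge β 𝒯 := by
  induction α using Ordinal.induction with
  | h α IH =>
    rcases eq_or_lt_of_le hβ with rfl | hlt
    · exact h
    rcases Ordinal.zero_or_succ_or_isSuccLimit α with rfl | ⟨δ, rfl⟩ | hlim
    · exact absurd hlt (not_lt_zero' (a := β))
    · exact IH δ (Order.lt_succ δ) (Order.lt_succ_iff.1 hlt) (RSge_succ_down h)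
    · exact (RSge_limit hlim).1 h β hlt

lemma RSge_infinite {α : Ordinal.{w}} (hα : 1 ≤ α) (h : RSge α 𝒯) : 𝒯.Infinite :=
  RSge_one.1 (RSge_antitone hα h)

end CT

namespace CT
variable {𝒯 : Set (CTheory L)}

lemma split_RSinf (hL : Cardinal.mk L.Sentence ≤ Cardinal.aleph0)
    (h : ∀ α : Ordinal.{w}, RSge α 𝒯) :
    ∃ ρ : L.Sentence, (∀ α : Ordinal.{w}, RSge α (nbhd 𝒯 ρ)) ∧
      (∀ α : Ordinal.{w}, RSge α (nbhd 𝒯 ρ.not)) := by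
  by_contra hc
  push_neg at hc
  have hg : ∀ ρ : L.Sentence, ∃ α : Ordinal.{w},
      ¬ RSge α (nbhd 𝒯 ρ) ∨ ¬ RSge α (nbhd 𝒯 ρ.not) := by
    intro ρ
    by_cases h1 : ∀ α : Ordinal.{w}, RSge α (nbhd 𝒯 ρ)
    · obtain ⟨α, hα⟩ := hc ρ h1
      exact ⟨α, Or.inr hα⟩
    · push_neg at h1
      obtain ⟨α, hα⟩ := h1
      exact ⟨α, Or.inl hα⟩
  choose g hg' using hg
  haveI : Countable L.Sentence := Cardinal.mk_le_aleph0_iff.1 hL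
  haveI : Nonempty L.Sentence := ⟨⊥⟩
  obtain ⟨f, hf⟩ := exists_surjective_nat L.Sentence
  set δ : Ordinal.{w} := ⨆ n, g (f n) with hδ
  have hmain := h (Order.succ (Order.succ δ))
  rw [RSge_succ_of_ne (Order.succ_ne_bot δ)] at hmain
  obtain ⟨φ, hinc, hφ⟩ := hmain
  have h0 : RSge (Order.succ δ) (nbhd 𝒯 (φ 0)) := hφ 0
  have hsub : nbhd 𝒯 (φ 1) ⊆ nbhd 𝒯 (φ 0).not := by
    intro T hT
    exact ⟨hT.1, mem_not_of_inconsistent T (hinc 1 0 one_ne_zero) hT.2⟩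
  have h1 : RSge (Order.succ δ) (nbhd 𝒯 (φ 0).not) := RSge_mono _ hsub (hφ 1)
  obtain ⟨n, hn⟩ := hf (φ 0)
  have hle : g (φ 0) ≤ Order.succ δ := by
    refine le_trans ?_ (Order.le_succ δ)
    rw [hδ, ← hn]
    exact Ordinal.le_iSup (fun n => g (f n)) n
  rcases hg' (φ 0) with hbad | hbad
  · exact hbad (RSge_antitone hle h0)
  · exact hbad (RSge_antitone hle h1)

lemma nbhd_inf (𝒯 : Set (CTheory L)) (φ ψ : L.Sentence) :
    nbhd 𝒯 (φ ⊓ ψ) = nbhd (nbhd 𝒯 φ) ψ := by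
  ext T
  constructor
  · rintro ⟨hT, hmem⟩
    obtain ⟨h1, h2⟩ := (inf_mem_iff T φ ψ).1 hmem
    exact ⟨⟨hT, h1⟩, h2⟩
  · rintro ⟨⟨hT, h1⟩, h2⟩
    exact ⟨hT, (inf_mem_iff T φ ψ).2 ⟨h1, h2⟩⟩

lemma nbhd_top (𝒯 : Set (CTheory L)) : nbhd 𝒯 (⊤ : L.Sentence) = 𝒯 :=
  Set.ext fun T => ⟨fun h => h.1, fun h => ⟨h, top_mem T⟩⟩

lemma ClE_nbhd (𝒯 : Set (CTheory L)) (φ : L.Sentence) :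
    ClE (nbhd 𝒯 φ) = ClE 𝒯 ∩ {T | φ ∈ T.1} := by
  ext T
  constructor
  · rintro (hT | hT)
    · exact ⟨Or.inl hT.1, hT.2⟩
    · have hφT : φ ∈ T.1 := by
        by_contra hc
        obtain ⟨T', hT'⟩ := (hT φ.not ((not_mem_iff T φ).2 hc)).nonempty
        exact not_both T' hT'.1.2 hT'.2
      exact ⟨Or.inr fun ψ hψ => (hT ψ hψ).mono fun T' h => ⟨h.1.1, h.2⟩, hφT⟩
  · rintro ⟨hCl | hacc, hφ⟩
    · exact Or.inl ⟨hCl, hφ⟩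
    · refine Or.inr fun ψ hψ => ?_
      have hinfψ := hacc (φ ⊓ ψ) ((inf_mem_iff T φ ψ).2 ⟨hφ, hψ⟩)
      rwa [nbhd_inf] at hinfψ

lemma split_unc (hL : Cardinal.mk L.Sentence ≤ Cardinal.aleph0)
    (h : ¬ (ClE 𝒯).Countable) :
    ∃ ρ : L.Sentence, ¬ (ClE (nbhd 𝒯 ρ)).Countable ∧ ¬ (ClE (nbhd 𝒯 ρ.not)).Countable := by
  classical
  haveI : Countable L.Sentence := Cardinal.mk_le_aleph0_iff.1 hL
  by_contra hc
  have hc' : ∀ ρ : L.Sentence,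
      (ClE (nbhd 𝒯 ρ)).Countable ∨ (ClE (nbhd 𝒯 ρ.not)).Countable := by
    intro ρ
    by_cases h1 : (ClE (nbhd 𝒯 ρ)).Countable
    · exact Or.inl h1
    · by_cases h2 : (ClE (nbhd 𝒯 ρ.not)).Countable
      · exact Or.inr h2
      · exact absurd ⟨ρ, h1, h2⟩ hc
  set A : L.Sentence → Set (CTheory L) := fun φ => ClE 𝒯 ∩ {T | φ ∈ T.1} with hA
  set Y : Set (CTheory L) := {T | T ∈ ClE 𝒯 ∧ ∀ φ ∈ T.1, ¬ (A φ).Countable} with hY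
  have hdiff : ClE 𝒯 \ Y ⊆ ⋃ φ : L.Sentence, (if (A φ).Countable then A φ else ∅) := by
    rintro T ⟨hT, hTY⟩
    have : ∃ φ ∈ T.1, (A φ).Countable := by
      by_contra hcc
      push_neg at hcc
      exact hTY ⟨hT, hcc⟩
    obtain ⟨φ, hφ, hφc⟩ := this
    exact Set.mem_iUnion.2 ⟨φ, by rw [if_pos hφc]; exact ⟨hT, hφ⟩⟩
  have hdiffc : (ClE 𝒯 \ Y).Countable := by
    refine Set.Countable.mono hdiff (Set.countable_iUnion fun φ => ?_)
    by_cases hφc : (A φ).Countable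
    · rwa [if_pos hφc]
    · rw [if_neg hφc]; exact Set.countable_empty
  have hYunc : ¬ Y.Countable := by
    intro hYc
    exact h (((hYc.union hdiffc)).mono fun T hT => by
      by_cases hTY : T ∈ Y
      · exact Or.inl hTY
      · exact Or.inr ⟨hT, hTY⟩)
  have hYnt : Y.Nontrivial := by
    by_contra hnt
    rw [Set.not_nontrivial_iff] at hnt
    exact hYunc hnt.countable
  obtain ⟨T, hT, T', hT', hne⟩ := hYnt
  have : ∃ φ : L.Sentence, (φ ∈ T.1 ∧ φ ∉ T'.1) ∨ (φ ∈ T'.1 ∧ φ ∉ T.1) := by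
    by_contra hcc
    push_neg at hcc
    refine hne (Subtype.ext (Set.ext fun φ => ?_))
    obtain ⟨h1, h2⟩ := hcc φ
    exact ⟨h1, h2⟩
  obtain ⟨φ, ⟨hφ1, hφ2⟩ | ⟨hφ1, hφ2⟩⟩ := this
  · have h1 := hT.2 φ hφ1
    have h2 := hT'.2 φ.not ((not_mem_iff T' φ).2 hφ2)
    rcases hc' φ with hcase | hcase
    · rw [ClE_nbhd] at hcase; exact h1 hcase
    · rw [ClE_nbhd] at hcase; exact h2 hcase
  · have h1 := hT'.2 φ hφ1
    have h2 := hT.2 φ.not ((not_mem_iff T φ).2 hφ2)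
    rcases hc' φ with hcase | hcase
    · rw [ClE_nbhd] at hcase; exact h1 hcase
    · rw [ClE_nbhd] at hcase; exact h2 hcase


lemma continuum_le_eSp (hL : Cardinal.mk L.Sentence ≤ Cardinal.aleph0)
    (h3 : ∀ α : Ordinal.{w}, RSge α 𝒯) :
    (2 : Cardinal.{max u v}) ^ Cardinal.aleph0 ≤ eSp 𝒯 := by
  classical
  set P : Set (CTheory L) → Prop := fun 𝒮 => ∀ α : Ordinal.{w}, RSge α 𝒮 with hP
  have split : ∀ 𝒮 : Set (CTheory L), P 𝒮 →
      ∃ ρ : L.Sentence, P (nbhd 𝒮 ρ) ∧ P (nbhd 𝒮 ρ.not) := by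
    intro 𝒮 h
    obtain ⟨ρ, h1, h2⟩ := split_RSinf hL h
    exact ⟨ρ, h1, h2⟩
  choose ρ hρ1 hρ2 using split
  -- the sentence chosen at a node, given the branch direction
  let sent : {𝒮 : Set (CTheory L) // P 𝒮} → Bool → L.Sentence := fun p b =>
    cond b (ρ p.1 p.2) (ρ p.1 p.2).not
  let step : {𝒮 : Set (CTheory L) // P 𝒮} → Bool → {𝒮 : Set (CTheory L) // P 𝒮} := fun p b =>
    ⟨nbhd p.1 (sent p b), by cases b; exacts [hρ2 p.1 p.2, hρ1 p.1 p.2]⟩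
  let G : (ℕ → Bool) → ℕ → {𝒮 : Set (CTheory L) // P 𝒮} := fun x n =>
    Nat.rec ⟨𝒯, h3⟩ (fun n p => step p (x n)) n
  let s : (ℕ → Bool) → ℕ → L.Sentence := fun x n => sent (G x n) (x n)
  have hGsucc : ∀ x n, (G x (n + 1)).1 = nbhd (G x n).1 (s x n) := fun x n => rfl
  -- agreement on prefixes
  have hagree : ∀ n (x y : ℕ → Bool), (∀ k < n, x k = y k) → G x n = G y n := by
    intro n
    induction n with
    | zero => intro x y _; rfl
    | succ n ih =>
      intro x y hxy
      have h1 : G x n = G y n := ih x y fun k hk => hxy k (Nat.lt_succ_of_lt hk)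
      show step (G x n) (x n) = step (G y n) (y n)
      rw [h1, hxy n (Nat.lt_succ_self n)]
  -- membership along a branch
  have hmem : ∀ x n (T : CTheory L), T ∈ (G x n).1 → T ∈ 𝒯 ∧ ∀ k < n, s x k ∈ T.1 := by
    intro x n
    induction n with
    | zero => intro T hT; exact ⟨hT, fun k hk => absurd hk (Nat.not_lt_zero k)⟩
    | succ n ih =>
      intro T hT
      rw [hGsucc] at hT
      obtain ⟨hT1, hT2⟩ := hT
      obtain ⟨hT3, hT4⟩ := ih T hT1
      refine ⟨hT3, fun k hk => ?_⟩
      rcases Nat.lt_succ_iff_lt_or_eq.1 hk with hk | rfl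
      · exact hT4 k hk
      · exact hT2
  have hinf : ∀ x n, ((G x n).1).Infinite := fun x n => RSge_one.1 ((G x n).2 1)
  -- the set of negations of sentences with finite neighbourhood
  set S : Set L.Sentence := {φ | (nbhd 𝒯 φ).Finite} with hS
  set D : L.Theory := Formula.not '' S with hD
  -- finite "bad" sets
  let u : L.Sentence → Set (CTheory L) := fun ψ =>
    if h : ∃ φ ∈ S, Formula.not φ = ψ then nbhd 𝒯 h.choose else ∅
  have hufin : ∀ ψ, (u ψ).Finite := by
    intro ψ
    by_cases h : ∃ φ ∈ S, Formula.not φ = ψ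
    · simp only [u, dif_pos h]; exact h.choose_spec.1
    · simp [u, dif_neg h]
  have humem : ∀ (ψ : L.Sentence) (T : CTheory L), ψ ∈ D → T ∈ 𝒯 → T ∉ u ψ → ψ ∈ T.1 := by
    intro ψ T hψ hT hTu
    obtain ⟨φ₀, hφ₀, hφeq⟩ := hψ
    have hex : ∃ φ ∈ S, Formula.not φ = ψ := ⟨φ₀, hφ₀, hφeq⟩
    rw [show u ψ = nbhd 𝒯 hex.choose from dif_pos hex] at hTu
    have : hex.choose ∉ T.1 := fun hc => hTu ⟨hT, hc⟩
    have := (not_mem_iff T hex.choose).2 this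
    rwa [show Formula.not hex.choose = ψ from hex.choose_spec.2] at this
  -- the branch theory is satisfiable
  have hsat : ∀ x : ℕ → Bool, ∃ T : CTheory L, Set.range (s x) ∪ D ⊆ T.1 := by
    intro x
    have hBsat : Theory.IsSatisfiable (Set.range (s x) ∪ D : L.Theory) := by
      rw [Theory.isSatisfiable_iff_isFinitelySatisfiable]
      intro T0 hT0
      -- bound the indices appearing in T0
      let idx : L.Sentence → ℕ := fun ψ => if h : ∃ k, s x k = ψ then h.choose else 0
      set n : ℕ := T0.sup idx + 1 with hn
      have hidx : ∀ ψ ∈ T0, ψ ∈ Set.range (s x) → ∃ k < n, s x k = ψ := by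
        intro ψ hψ hrange
        obtain ⟨k, hk⟩ := hrange
        have hex : ∃ k, s x k = ψ := ⟨k, hk⟩
        refine ⟨idx ψ, ?_, by rw [show idx ψ = hex.choose from dif_pos hex]; exact hex.choose_spec⟩
        calc idx ψ ≤ T0.sup idx := Finset.le_sup hψ
          _ < n := Nat.lt_succ_self _
      -- a theory avoiding the finitely many bad sets
      have hU : (⋃ ψ ∈ (T0 : Set L.Sentence), u ψ).Finite :=
        Set.Finite.biUnion T0.finite_toSet fun ψ _ => hufin ψ
      obtain ⟨T, hT⟩ := ((hinf x n).diff hU).nonempty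
      obtain ⟨hTmem, hTU⟩ := hT
      obtain ⟨hT𝒯, hTs⟩ := hmem x n T hTmem
      refine (T.2.1).mono ?_
      intro ψ hψ
      rcases hT0 hψ with hrange | hDmem
      · obtain ⟨k, hk, hkeq⟩ := hidx ψ hψ hrange
        rw [← hkeq]; exact hTs k hk
      · exact humem ψ T hDmem hT𝒯 fun hc => hTU (Set.mem_biUnion hψ hc)
    obtain ⟨M⟩ := hBsat
    exact ⟨⟨L.completeTheory M, completeTheory.isMaximal L M⟩,
      Theory.model_iff_subset_completeTheory.1 M.is_model⟩
  choose TX hTX using hsat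
  -- each branch theory is an accumulation point
  have hacc : ∀ x : ℕ → Bool, IsAccPoint 𝒯 (TX x) := by
    intro x φ hφ
    by_contra hfin
    rw [Set.not_infinite] at hfin
    exact not_both (TX x) hφ (hTX x (Or.inr ⟨φ, hfin, rfl⟩))
  -- injectivity
  have hinj : Function.Injective fun x : ℕ → Bool => TX x := by
    intro x y hxy0
    have hxy : TX x = TX y := hxy0
    by_contra hne
    have hex : ∃ n, x n ≠ y n := by
      by_contra hc
      push_neg at hc
      exact hne (funext hc)
    set n := Nat.find hex with hn
    have hGeq : G x n = G y n := hagree n x y fun k hk => by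
      by_contra hc
      exact Nat.find_min hex hk hc
    have hxmem : s x n ∈ (TX x).1 := hTX x (Or.inl ⟨n, rfl⟩)
    have hymem : s y n ∈ (TX y).1 := hTX y (Or.inl ⟨n, rfl⟩)
    rw [← hxy] at hymem
    have hbne : x n ≠ y n := Nat.find_spec hex
    have : s y n = (s x n).not ∨ s x n = (s y n).not := by
      simp only [s, sent, hGeq]
      rcases Bool.eq_false_or_eq_true (x n) with hx | hx <;>
        rcases Bool.eq_false_or_eq_true (y n) with hy | hy <;>
          simp [hx, hy] at hbne ⊢
    rcases this with heq | heq
    · rw [heq] at hymem; exact not_both (TX x) hxmem hymem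
    · rw [heq] at hxmem; exact not_both (TX x) hymem hxmem
  -- cardinality
  let F : ULift.{max u v} (ℕ → Bool) → {T : CTheory L // IsAccPoint 𝒯 T} := fun x =>
    ⟨TX x.down, hacc x.down⟩
  have hFinj : Function.Injective F := by
    intro a b hab
    have : TX a.down = TX b.down := congrArg Subtype.val hab
    exact ULift.ext a b (hinj this)
  have hle := Cardinal.mk_le_of_injective hFinj
  calc (2 : Cardinal.{max u v}) ^ Cardinal.aleph0
      = Cardinal.mk (ULift.{max u v} (ℕ → Bool)) := by
        rw [Cardinal.mk_uLift,
          show (Cardinal.mk (ℕ → Bool) : Cardinal.{0}) = 2 ^ Cardinal.aleph0 by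
            rw [← Cardinal.mk_bool, ← Cardinal.mk_nat, Cardinal.power_def],
          Cardinal.lift_power, Cardinal.lift_aleph0, Cardinal.lift_two]
    _ ≤ eSp 𝒯 := hle


lemma RSge_of_uncountable (hL : Cardinal.mk L.Sentence ≤ Cardinal.aleph0) (α : Ordinal.{w}) :
    ∀ 𝒯 : Set (CTheory L), ¬ (ClE 𝒯).Countable → RSge α 𝒯 := by
  induction α using Ordinal.induction with
  | h α IH =>
  intro 𝒯 h
  rcases Ordinal.zero_or_succ_or_isSuccLimit α with rfl | ⟨δ, rfl⟩ | hlim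
  · rw [RSge_zero]
    rcases Set.eq_empty_or_nonempty 𝒯 with rfl | hne
    · exfalso
      refine h (Set.Countable.mono ?_ Set.countable_empty)
      rintro T (hT | hT)
      · exact hT
      · obtain ⟨T', hT'⟩ := (hT ⊤ (top_mem T)).nonempty
        exact hT'.1
    · exact hne
  · rcases eq_or_ne δ 0 with rfl | hδ
    · rw [Ordinal.succ_zero, RSge_one]
      by_contra hfin
      rw [Set.not_infinite] at hfin
      refine h (Set.Countable.mono ?_ hfin.countable)
      rintro T (hT | hT)
      · exact hT
      · exfalso
        have hinf := hT ⊤ (top_mem T)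
        rw [nbhd_top] at hinf
        exact Set.not_infinite.2 hfin hinf
    · rw [RSge_succ_of_ne hδ]
      have split : ∀ 𝒮 : Set (CTheory L), ¬ (ClE 𝒮).Countable →
          ∃ ρ : L.Sentence, ¬ (ClE (nbhd 𝒮 ρ)).Countable ∧
            ¬ (ClE (nbhd 𝒮 ρ.not)).Countable := fun 𝒮 h => split_unc hL h
      choose ρ hρ1 hρ2 using split
      let W : ℕ → {𝒮 : Set (CTheory L) // ¬ (ClE 𝒮).Countable} := fun n =>
        Nat.rec ⟨𝒯, h⟩ (fun _ p => ⟨nbhd p.1 (ρ p.1 p.2).not, hρ2 p.1 p.2⟩) n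
      let r : ℕ → L.Sentence := fun n => ρ (W n).1 (W n).2
      let π : ℕ → L.Sentence := fun n => Nat.rec ⊤ (fun k q => q ⊓ (r k).not) n
      let σ : ℕ → L.Sentence := fun n => π n ⊓ r n
      have hπ : ∀ n, nbhd 𝒯 (π n) = (W n).1 := by
        intro n
        induction n with
        | zero => exact nbhd_top 𝒯
        | succ n ih =>
          show nbhd 𝒯 (π n ⊓ (r n).not) = nbhd (W n).1 (r n).not
          rw [nbhd_inf, ih]
      have hσ : ∀ n, ¬ (ClE (nbhd 𝒯 (σ n))).Countable := by
        intro n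
        have heq : nbhd 𝒯 (σ n) = nbhd (W n).1 (r n) := by
          show nbhd 𝒯 (π n ⊓ r n) = _
          rw [nbhd_inf, hπ]
        rw [heq]
        exact hρ1 (W n).1 (W n).2
      have hπreal : ∀ (M : Type (max u v)) [L.Structure M], ∀ n : ℕ,
          M ⊨ π n → ∀ k < n, ¬ M ⊨ r k := by
        intro M _ n
        induction n with
        | zero => intro _ k hk; exact absurd hk (Nat.not_lt_zero k)
        | succ n ih =>
          intro hreal k hk
          have h2 : M ⊨ π n ∧ M ⊨ (r n).not :=
            Formula.realize_inf.1 (hreal : M ⊨ π n ⊓ (r n).not)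
          rcases Nat.lt_succ_iff_lt_or_eq.1 hk with hk | rfl
          · exact ih h2.1 k hk
          · have := h2.2
            rw [Sentence.realize_not] at this
            exact this
      have hincons : ∀ m n : ℕ, m < n → Inconsistent (σ m) (σ n) := by
        intro m n hmn hsat
        obtain ⟨M⟩ := hsat
        have hm : M ⊨ σ m := M.is_model.realize_of_mem (φ := σ m) (by simp)
        have hn : M ⊨ σ n := M.is_model.realize_of_mem (φ := σ n) (by simp)
        have h1 : M ⊨ r m := (Formula.realize_inf.1 hm).2
        have h2 : M ⊨ π n := (Formula.realize_inf.1 hn).1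
        exact hπreal M n h2 m hmn h1
      refine ⟨σ, ?_, fun k => IH δ (Order.lt_succ δ) _ (hσ k)⟩
      intro m n hmn
      rcases Nat.lt_or_ge m n with h' | h'
      · exact hincons m n h'
      · exact inconsistent_symm (hincons n m (h'.lt_of_ne (Ne.symm hmn)))
  · rw [RSge_limit hlim]
    exact fun γ hγ => IH γ hγ 𝒯 h

end CT

/-- Theorem 4.5: if the language has at most countably many sentences, then
the following are equivalent: (1) `|Cl_E(𝒯)| = 2^ℵ₀`; (2) `e`-Sp(𝒯) = 2^ℵ₀;
(3) `RS(𝒯) = ∞`. -/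
theorem continuum_clE_tfae (𝒯 : Set (CTheory L))
    (hL : Cardinal.mk L.Sentence ≤ Cardinal.aleph0) :
    List.TFAE
      [Cardinal.mk ↥(ClE 𝒯) = (2 : Cardinal) ^ Cardinal.aleph0,
       eSp 𝒯 = (2 : Cardinal) ^ Cardinal.aleph0,
       (∀ α : Ordinal.{w}, RSge α 𝒯)] := by
  classical
  have hub : Cardinal.mk (CTheory L) ≤ (2 : Cardinal.{max u v}) ^ Cardinal.aleph0 := by
    calc Cardinal.mk (CTheory L) ≤ Cardinal.mk L.Theory := Cardinal.mk_subtype_le _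
      _ = 2 ^ Cardinal.mk L.Sentence := Cardinal.mk_set
      _ ≤ 2 ^ Cardinal.aleph0 := Cardinal.power_le_power_left two_ne_zero hL
  tfae_have 3 → 2 := by
    intro h3
    exact le_antisymm (le_trans (Cardinal.mk_subtype_le _) hub) (CT.continuum_le_eSp hL h3)
  tfae_have 2 → 1 := by
    intro h2
    refine le_antisymm (le_trans (Cardinal.mk_set_le _) hub) ?_
    rw [← h2]
    exact Cardinal.mk_le_mk_of_subset (Set.subset_union_right)
  tfae_have 1 → 3 := by
    intro h1 α
    apply CT.RSge_of_uncountable hL α 𝒯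
    intro hc
    haveI := hc.to_subtype
    have hle : Cardinal.mk ↥(ClE 𝒯) ≤ Cardinal.aleph0 := Cardinal.mk_le_aleph0_iff.2 this
    rw [h1] at hle
    exact absurd hle (not_le.2 (Cardinal.cantor Cardinal.aleph0))
  tfae_finish
end
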